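/- For any symmetric positive definite nominal matrix Ẑ ∈ S_{++}^d and radius ρ > 0, the set G^+ = {Z ∈ S_+^d : G(Z,Ẑ) ≤ ρ and Z ⪰ λ_min(Ẑ) I} is convex and compact. -/

import Mathlib

open Matrix

/-- The positive semidefinite square root of a matrix (zero if the matrix is
not positive semidefinite). -/
noncomputable def psdSqrt {d : ℕ} (A : Matrix (Fin d) (Fin d) ℝ) :
    Matrix (Fin d) (Fin d) ℝ := by
  classical exact if h : A.PosSemidef then h.1.eigenvectorUnitary.1 *
    diagonal ((↑) ∘ Real.sqrt ∘ h.1.eigenvalues) * (star h.1.eigenvectorUnitary : Matrix (Fin d) (Fin d) ℝ)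
    else 0

/-- The positive semidefinite square root (replacement for the removed Mathlib API). -/
noncomputable def Matrix.PosSemidef.sqrt {d : ℕ} {A : Matrix (Fin d) (Fin d) ℝ}
    (_hA : A.PosSemidef) : Matrix (Fin d) (Fin d) ℝ := psdSqrt A

theorem Matrix.PosSemidef.posSemidef_sqrt {d : ℕ} {A : Matrix (Fin d) (Fin d) ℝ}
    (hA : A.PosSemidef) : hA.sqrt.PosSemidef := by
  classical
  unfold Matrix.PosSemidef.sqrt psdSqrt
  rw [dif_pos hA]
  have := (Matrix.PosSemidef.diagonal (R := ℝ) (n := Fin d)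
    (d := (↑) ∘ Real.sqrt ∘ hA.1.eigenvalues)
    (fun i => by simp [Real.sqrt_nonneg])).mul_mul_conjTranspose_same
    (hA.1.eigenvectorUnitary : Matrix (Fin d) (Fin d) ℝ)
  simpa [Matrix.star_eq_conjTranspose] using this

theorem Matrix.PosSemidef.sqrt_mul_self {d : ℕ} {A : Matrix (Fin d) (Fin d) ℝ}
    (hA : A.PosSemidef) : hA.sqrt * hA.sqrt = A := by
  classical
  unfold Matrix.PosSemidef.sqrt psdSqrt
  rw [dif_pos hA]
  have hU : (star hA.1.eigenvectorUnitary : Matrix (Fin d) (Fin d) ℝ) *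
      (hA.1.eigenvectorUnitary : Matrix (Fin d) (Fin d) ℝ) = 1 :=
    Unitary.coe_star_mul_self _
  conv_rhs => rw [hA.1.spectral_theorem, Unitary.conjStarAlgAut_apply]
  rw [show ∀ U D S : Matrix (Fin d) (Fin d) ℝ, U * D * S * (U * D * S) = U * (D * (S * U) * D) * S
    from fun U D S => by simp only [Matrix.mul_assoc], hU, Matrix.mul_one,
    Matrix.diagonal_mul_diagonal]
  congr 3
  funext i
  simp [Real.mul_self_sqrt (hA.eigenvalues_nonneg i)]

section aux
variable {d : ℕ}

lemma psdSqrt_eq {A : Matrix (Fin d) (Fin d) ℝ} (hA : A.PosSemidef) :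
    psdSqrt A = hA.sqrt := by
  simp only [psdSqrt]
  rw [dif_pos hA]
  unfold Matrix.PosSemidef.sqrt psdSqrt
  rw [dif_pos hA]

lemma psdSqrt_posSemidef {A : Matrix (Fin d) (Fin d) ℝ} (hA : A.PosSemidef) :
    (psdSqrt A).PosSemidef := by
  rw [psdSqrt_eq hA]; exact hA.posSemidef_sqrt

lemma psdSqrt_mul_self {A : Matrix (Fin d) (Fin d) ℝ} (hA : A.PosSemidef) :
    psdSqrt A * psdSqrt A = A := by
  rw [psdSqrt_eq hA]; exact hA.sqrt_mul_self

lemma diag_nonneg' {Z : Matrix (Fin d) (Fin d) ℝ} (hZ : Z.PosSemidef)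
    (i : Fin d) : 0 ≤ Z i i := by
  have h := hZ.dotProduct_mulVec_nonneg (Pi.single i 1)
  simpa using h

lemma trace_nonneg' {Z : Matrix (Fin d) (Fin d) ℝ} (hZ : Z.PosSemidef) :
    0 ≤ Z.trace := by
  rw [Matrix.trace]
  exact Finset.sum_nonneg fun i _ => diag_nonneg' hZ i

lemma diag_le_trace {Z : Matrix (Fin d) (Fin d) ℝ} (hZ : Z.PosSemidef) (i : Fin d) :
    Z i i ≤ Z.trace := by
  rw [Matrix.trace]
  exact Finset.single_le_sum (fun j _ => diag_nonneg' hZ j) (Finset.mem_univ i)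

lemma entry_symm {Z : Matrix (Fin d) (Fin d) ℝ} (hZ : Z.IsHermitian) (i j : Fin d) :
    Z j i = Z i j := by
  have := congrFun (congrFun hZ i) j
  simpa [Matrix.conjTranspose_apply] using this

lemma abs_entry_le_trace {Z : Matrix (Fin d) (Fin d) ℝ} (hZ : Z.PosSemidef)
    (i j : Fin d) : |Z i j| ≤ Z.trace := by
  have hsym := entry_symm hZ.1 i j
  have h1 := hZ.dotProduct_mulVec_nonneg (Pi.single i 1 + Pi.single j 1)
  have h2 := hZ.dotProduct_mulVec_nonneg (Pi.single i 1 - Pi.single j 1)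
  simp only [star_trivial, Matrix.mulVec_add, Matrix.mulVec_sub, dotProduct_add,
    dotProduct_sub, add_dotProduct, sub_dotProduct, Matrix.mulVec_single,
    single_dotProduct, mul_one, one_mul, MulOpposite.op_one, one_smul, Matrix.col_apply] at h1 h2
  have hii := diag_le_trace hZ i
  have hjj := diag_le_trace hZ j
  have htr := trace_nonneg' hZ
  rcases abs_cases (Z i j) with ⟨he, _⟩ | ⟨he, _⟩ <;> rw [he] <;> nlinarith

lemma trace_mul_psd_nonneg {A B : Matrix (Fin d) (Fin d) ℝ}
    (hA : A.PosSemidef) (hB : B.PosSemidef) : 0 ≤ (A * B).trace := by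
  set R := hA.sqrt with hRdef
  have hR : R.PosSemidef := hA.posSemidef_sqrt
  have hRR : R * R = A := hA.sqrt_mul_self
  have h1 : (A * B).trace = (R * B * R).trace := by
    rw [← hRR, Matrix.mul_assoc, Matrix.trace_mul_comm, Matrix.mul_assoc]
  rw [h1]
  have : (Rᴴ * B * R).PosSemidef := hB.conjTranspose_mul_mul_same R
  rw [hR.1] at this
  exact trace_nonneg' this

end aux

section amgm
variable {d : ℕ}

lemma smul_one_posDef {ε : ℝ} (hε : 0 < ε) :
    (ε • (1 : Matrix (Fin d) (Fin d) ℝ)).PosDef := by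
  rw [Matrix.smul_one_eq_diagonal]
  exact Matrix.PosDef.diagonal fun _ => hε

lemma amgm_trace {X Y : Matrix (Fin d) (Fin d) ℝ} (hX : X.PosSemidef) (hY : Y.PosDef) :
    2 * hX.sqrt.trace ≤ (X * Y⁻¹).trace + Y.trace := by
  set R := hX.sqrt with hRdef
  have hR : R.PosSemidef := hX.posSemidef_sqrt
  have hRR : R * R = X := hX.sqrt_mul_self
  set Q := hY.posSemidef.sqrt with hQdef
  have hQ : Q.PosSemidef := hY.posSemidef.posSemidef_sqrt
  have hQQ : Q * Q = Y := hY.posSemidef.sqrt_mul_self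
  have hdet : IsUnit Q.det := by
    have h1 : Q.det * Q.det = Y.det := by rw [← Matrix.det_mul, hQQ]
    have h2 : 0 < Y.det := hY.det_pos
    refine isUnit_iff_ne_zero.2 fun h => ?_
    rw [h, mul_zero] at h1; exact h2.ne' h1.symm
  have hQi : Q⁻¹ * Q = 1 := Matrix.nonsing_inv_mul _ hdet
  have hQi' : Q * Q⁻¹ = 1 := Matrix.mul_nonsing_inv _ hdet
  set M := Q⁻¹ * R - Q with hM
  have hMH : Mᴴ = R * Q⁻¹ - Q := by
    rw [hM, Matrix.conjTranspose_sub, Matrix.conjTranspose_mul,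
      Matrix.conjTranspose_nonsing_inv, hR.1, hQ.1]
  have hpsd : (Mᴴ * M).PosSemidef := Matrix.posSemidef_conjTranspose_mul_self M
  have htr := trace_nonneg' hpsd
  have hexp : (Mᴴ * M).trace
      = (X * Y⁻¹).trace - 2 * R.trace + Y.trace := by
    rw [hMH, hM]
    rw [Matrix.sub_mul, Matrix.mul_sub, Matrix.mul_sub]
    have e1 : R * Q⁻¹ * (Q⁻¹ * R) = R * (Q⁻¹ * Q⁻¹) * R := by
      simp [Matrix.mul_assoc]
    have e2 : R * Q⁻¹ * Q = R := by rw [Matrix.mul_assoc, hQi, Matrix.mul_one]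
    have e3 : Q * (Q⁻¹ * R) = R := by rw [← Matrix.mul_assoc, hQi', Matrix.one_mul]
    have e4 : (R * (Q⁻¹ * Q⁻¹) * R).trace = (X * Y⁻¹).trace := by
      rw [Matrix.trace_mul_comm, ← Matrix.mul_assoc, hRR, ← hQQ, Matrix.mul_inv_rev]
    rw [e1, e2, e3]
    rw [Matrix.trace_sub, Matrix.trace_sub, Matrix.trace_sub, e4, hQQ]
    ring
  rw [hexp] at htr; linarith

lemma trace_mul_inv_perturb {X : Matrix (Fin d) (Fin d) ℝ} (hX : X.PosSemidef)
    {ε : ℝ} (hε : 0 < ε) :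
    (X * (hX.sqrt + ε • (1 : Matrix (Fin d) (Fin d) ℝ))⁻¹).trace ≤ hX.sqrt.trace := by
  set R := hX.sqrt with hRdef
  have hR : R.PosSemidef := hX.posSemidef_sqrt
  have hRR : R * R = X := hX.sqrt_mul_self
  set Yε := R + ε • (1 : Matrix (Fin d) (Fin d) ℝ) with hYdef
  have hYpd : Yε.PosDef := Matrix.PosDef.posSemidef_add hR (smul_one_posDef hε)
  have hdet : IsUnit Yε.det := isUnit_iff_ne_zero.2 hYpd.det_pos.ne'
  have hmul : R * Yε = X + ε • R := by
    rw [hYdef, Matrix.mul_add, hRR, Matrix.mul_smul, Matrix.mul_one]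
  have key : R - X * Yε⁻¹ = ε • (R * Yε⁻¹) := by
    have h1 : R * Yε * Yε⁻¹ = R := by
      rw [Matrix.mul_assoc, Matrix.mul_nonsing_inv _ hdet, Matrix.mul_one]
    rw [hmul, Matrix.add_mul, Matrix.smul_mul] at h1
    linear_combination (norm := module) -h1
  have hnn : 0 ≤ (R * Yε⁻¹).trace :=
    trace_mul_psd_nonneg hR hYpd.inv.posSemidef
  have := congrArg Matrix.trace key
  rw [Matrix.trace_sub, Matrix.trace_smul] at this
  have : R.trace - (X * Yε⁻¹).trace = ε * (R * Yε⁻¹).trace := by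
    simpa using this
  nlinarith
end amgm

/-- The Gelbrich distance between covariance matrices. -/
noncomputable def gelbrich {d : ℕ} (S1 S2 : Matrix (Fin d) (Fin d) ℝ) : ℝ :=
  Real.sqrt (S1 + S2 - (2 : ℝ) • psdSqrt (psdSqrt S2 * S1 * psdSqrt S2)).trace


section char
variable {d : ℕ}

lemma sandwich_psd {Z Zh : Matrix (Fin d) (Fin d) ℝ} (hZ : Z.PosSemidef)
    (hZh : Zh.PosSemidef) : (psdSqrt Zh * Z * psdSqrt Zh).PosSemidef := by
  have hB : (psdSqrt Zh).PosSemidef := psdSqrt_posSemidef hZh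
  have := hZ.conjTranspose_mul_mul_same (psdSqrt Zh)
  rwa [hB.1] at this

lemma gelbrich_le_iff {Z Zh : Matrix (Fin d) (Fin d) ℝ} (hZ : Z.PosSemidef)
    (hZh : Zh.PosSemidef) {ρ : ℝ} (hρ : 0 < ρ) :
    gelbrich Z Zh ≤ ρ ↔ ∀ Y : Matrix (Fin d) (Fin d) ℝ, Y.PosDef →
      Z.trace + Zh.trace -
        ((psdSqrt Zh * Z * psdSqrt Zh * Y⁻¹).trace + Y.trace) ≤ ρ ^ 2 := by
  set X := psdSqrt Zh * Z * psdSqrt Zh with hXdef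
  have hX : X.PosSemidef := sandwich_psd hZ hZh
  have hg : gelbrich Z Zh
      = Real.sqrt (Z.trace + Zh.trace - 2 * hX.sqrt.trace) := by
    rw [gelbrich, ← hXdef, psdSqrt_eq hX]
    congr 1
    rw [Matrix.trace_sub, Matrix.trace_add, Matrix.trace_smul]
    simp [smul_eq_mul]
  set T := Z.trace + Zh.trace - 2 * hX.sqrt.trace with hTdef
  constructor
  · intro h Y hY
    have hT : T ≤ ρ ^ 2 := by
      by_cases h0 : 0 ≤ T
      · rw [hg] at h
        have := Real.sq_sqrt h0
        nlinarith [Real.sqrt_nonneg T]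
      · nlinarith [sq_nonneg ρ]
    have := amgm_trace hX hY
    rw [hTdef] at hT
    linarith
  · intro h
    have hT : T ≤ ρ ^ 2 := by
      refine le_of_forall_pos_le_add fun δ hδ => ?_
      have hε : (0:ℝ) < δ / (d + 1) := by positivity
      set ε := δ / (d + 1) with hεdef
      have hYpd : (hX.sqrt + ε • (1 : Matrix (Fin d) (Fin d) ℝ)).PosDef :=
        Matrix.PosDef.posSemidef_add hX.posSemidef_sqrt (smul_one_posDef hε)
      have hcond := h _ hYpd
      have htrY : (hX.sqrt + ε • (1 : Matrix (Fin d) (Fin d) ℝ)).trace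
          = hX.sqrt.trace + ε * d := by
        rw [Matrix.trace_add, Matrix.trace_smul, Matrix.trace_one]
        simp [smul_eq_mul]
      have hperturb := trace_mul_inv_perturb hX hε
      rw [htrY] at hcond
      have hεd : ε * d ≤ δ := by
        rw [hεdef]
        rw [div_mul_eq_mul_div, div_le_iff₀ (by positivity)]
        nlinarith
      rw [hTdef]
      linarith
    rw [hg]
    calc Real.sqrt T ≤ Real.sqrt (ρ ^ 2) := Real.sqrt_le_sqrt hT
    _ = ρ := Real.sqrt_sq hρ.le
end char

/-- The smallest eigenvalue of a Hermitian matrix. -/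
noncomputable def lamMin {d : ℕ} (Z : Matrix (Fin d) (Fin d) ℝ)
    (hZ : Z.IsHermitian) : ℝ :=
  ⨅ i, hZ.eigenvalues i


section main
variable {d : ℕ}

lemma psd_smul {Z : Matrix (Fin d) (Fin d) ℝ} (hZ : Z.PosSemidef) {a : ℝ}
    (ha : 0 ≤ a) : (a • Z).PosSemidef := by
  refine Matrix.PosSemidef.of_dotProduct_mulVec_nonneg ?_ fun x => ?_
  · unfold Matrix.IsHermitian
    rw [Matrix.conjTranspose_smul, hZ.1]
    simp
  · rw [Matrix.smul_mulVec, dotProduct_smul]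
    exact mul_nonneg ha (hZ.dotProduct_mulVec_nonneg x)

lemma isClosed_posSemidef :
    IsClosed {Z : Matrix (Fin d) (Fin d) ℝ | Z.PosSemidef} := by
  have : {Z : Matrix (Fin d) (Fin d) ℝ | Z.PosSemidef}
      = {Z : Matrix (Fin d) (Fin d) ℝ | Zᴴ = Z}
        ∩ ⋂ x : Fin d → ℝ, {Z : Matrix (Fin d) (Fin d) ℝ | 0 ≤ x ⬝ᵥ Z *ᵥ x} := by
    ext Z
    simp only [Set.mem_setOf_eq, Set.mem_inter_iff, Set.mem_iInter]
    constructor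
    · exact fun h => ⟨h.1, fun x => by simpa using h.dotProduct_mulVec_nonneg x⟩
    · exact fun h => Matrix.PosSemidef.of_dotProduct_mulVec_nonneg h.1 fun x => by simpa using h.2 x
  rw [this]
  refine IsClosed.inter ?_ (isClosed_iInter fun x => ?_)
  · exact isClosed_eq (continuous_id.matrix_conjTranspose) continuous_id
  · exact isClosed_le continuous_const
      (continuous_const.dotProduct (continuous_id.matrix_mulVec continuous_const))

end main

/-- For a positive definite nominal matrix `Ẑ` and radius `ρ > 0`, the set
`G⁺ = {Z ⪰ 0 : G(Z, Ẑ) ≤ ρ, Z ⪰ λ_min(Ẑ) I}` is convex and compact. -/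
theorem gelbrich_ball_convex_compact {d : ℕ}
    (Zh : Matrix (Fin d) (Fin d) ℝ) (hZh : Zh.PosDef) (ρ : ℝ) (hρ : 0 < ρ) :
    Convex ℝ {Z : Matrix (Fin d) (Fin d) ℝ | Z.PosSemidef ∧ gelbrich Z Zh ≤ ρ ∧
        (Z - lamMin Zh hZh.1 • (1 : Matrix (Fin d) (Fin d) ℝ)).PosSemidef} ∧
    IsCompact {Z : Matrix (Fin d) (Fin d) ℝ | Z.PosSemidef ∧ gelbrich Z Zh ≤ ρ ∧
        (Z - lamMin Zh hZh.1 • (1 : Matrix (Fin d) (Fin d) ℝ)).PosSemidef} := by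
  set lam := lamMin Zh hZh.1 with hlam
  set B := psdSqrt Zh with hB
  -- reformulate the set
  have hset : {Z : Matrix (Fin d) (Fin d) ℝ | Z.PosSemidef ∧ gelbrich Z Zh ≤ ρ ∧
        (Z - lam • (1 : Matrix (Fin d) (Fin d) ℝ)).PosSemidef}
      = {Z : Matrix (Fin d) (Fin d) ℝ | Z.PosSemidef ∧
          (∀ Y : Matrix (Fin d) (Fin d) ℝ, Y.PosDef →
            Z.trace + Zh.trace - ((B * Z * B * Y⁻¹).trace + Y.trace) ≤ ρ ^ 2) ∧
          (Z - lam • (1 : Matrix (Fin d) (Fin d) ℝ)).PosSemidef} := by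
    ext Z
    simp only [Set.mem_setOf_eq]
    constructor
    · rintro ⟨h1, h2, h3⟩
      exact ⟨h1, (gelbrich_le_iff h1 hZh.posSemidef hρ).1 h2, h3⟩
    · rintro ⟨h1, h2, h3⟩
      exact ⟨h1, (gelbrich_le_iff h1 hZh.posSemidef hρ).2 h2, h3⟩
  rw [hset]
  set S := {Z : Matrix (Fin d) (Fin d) ℝ | Z.PosSemidef ∧
          (∀ Y : Matrix (Fin d) (Fin d) ℝ, Y.PosDef →
            Z.trace + Zh.trace - ((B * Z * B * Y⁻¹).trace + Y.trace) ≤ ρ ^ 2) ∧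
          (Z - lam • (1 : Matrix (Fin d) (Fin d) ℝ)).PosSemidef} with hS
  constructor
  · -- convexity
    rintro Z₁ ⟨h1, h2, h3⟩ Z₂ ⟨h1', h2', h3'⟩ a b ha hb hab
    refine ⟨(psd_smul h1 ha).add (psd_smul h1' hb), fun Y hY => ?_, ?_⟩
    · have e1 := h2 Y hY
      have e2 := h2' Y hY
      have ht : (a • Z₁ + b • Z₂).trace = a * Z₁.trace + b * Z₂.trace := by
        rw [Matrix.trace_add, Matrix.trace_smul, Matrix.trace_smul]; simp [smul_eq_mul]
      have hm : B * (a • Z₁ + b • Z₂) * B * Y⁻¹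
          = a • (B * Z₁ * B * Y⁻¹) + b • (B * Z₂ * B * Y⁻¹) := by
        rw [Matrix.mul_add, Matrix.add_mul, Matrix.add_mul]
        rw [Matrix.mul_smul, Matrix.smul_mul, Matrix.smul_mul,
          Matrix.mul_smul, Matrix.smul_mul, Matrix.smul_mul]
      have ht2 : (B * (a • Z₁ + b • Z₂) * B * Y⁻¹).trace
          = a * (B * Z₁ * B * Y⁻¹).trace + b * (B * Z₂ * B * Y⁻¹).trace := by
        rw [hm, Matrix.trace_add, Matrix.trace_smul, Matrix.trace_smul]
        simp [smul_eq_mul]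
      rw [ht, ht2]
      have hb' : b = 1 - a := by linarith
      subst hb'
      nlinarith [mul_le_mul_of_nonneg_left e1 ha, mul_le_mul_of_nonneg_left e2 hb]
    · have hcomb : a • Z₁ + b • Z₂ - lam • (1 : Matrix (Fin d) (Fin d) ℝ)
          = a • (Z₁ - lam • (1 : Matrix (Fin d) (Fin d) ℝ))
            + b • (Z₂ - lam • (1 : Matrix (Fin d) (Fin d) ℝ)) := by
        have h1ab : (a + b) • (lam • (1 : Matrix (Fin d) (Fin d) ℝ))
            = lam • (1 : Matrix (Fin d) (Fin d) ℝ) := by rw [hab, one_smul]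
        linear_combination (norm := module) h1ab
      rw [hcomb]
      exact (psd_smul h3 ha).add (psd_smul h3' hb)
  · -- compactness
    have hclosed : IsClosed S := by
      have hSeq : S = {Z : Matrix (Fin d) (Fin d) ℝ | Z.PosSemidef}
          ∩ ((⋂ (Y : Matrix (Fin d) (Fin d) ℝ) (_ : Y.PosDef),
              {Z : Matrix (Fin d) (Fin d) ℝ |
                Z.trace + Zh.trace - ((B * Z * B * Y⁻¹).trace + Y.trace) ≤ ρ ^ 2})
            ∩ {Z : Matrix (Fin d) (Fin d) ℝ |
                (Z - lam • (1 : Matrix (Fin d) (Fin d) ℝ)).PosSemidef}) := by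
        ext Z
        simp only [hS, Set.mem_setOf_eq, Set.mem_inter_iff, Set.mem_iInter]
      rw [hSeq]
      refine isClosed_posSemidef.inter (IsClosed.inter ?_ ?_)
      · refine isClosed_iInter fun Y => isClosed_iInter fun hY => ?_
        refine isClosed_le ?_ continuous_const
        have hc : Continuous fun Z : Matrix (Fin d) (Fin d) ℝ =>
            (B * Z * B * Y⁻¹).trace :=
          (((continuous_const.matrix_mul continuous_id).matrix_mul
            continuous_const).matrix_mul continuous_const).matrix_trace
        have hc2 : Continuous fun Z : Matrix (Fin d) (Fin d) ℝ => Z.trace :=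
          continuous_id.matrix_trace
        fun_prop
      · have : Continuous fun Z : Matrix (Fin d) (Fin d) ℝ =>
            Z - lam • (1 : Matrix (Fin d) (Fin d) ℝ) :=
          continuous_id.sub continuous_const
        exact isClosed_posSemidef.preimage this
    -- boundedness
    set s : ℝ := 2 * ((d:ℝ)^2 * Zh.trace + 1) with hsdef
    have hZhtr : 0 ≤ Zh.trace := trace_nonneg' hZh.posSemidef
    have hs : 0 < s := by positivity
    set C : ℝ := 2 * (ρ ^ 2 + s * d) with hCdef
    have hC : 0 < C := by positivity
    have hsub : S ⊆ Set.pi Set.univ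
        (fun _ : Fin d => Set.pi Set.univ fun _ : Fin d => Set.Icc (-C) C) := by
      rintro Z ⟨h1, h2, _⟩
      -- trace bound
      have hYpd : (s • (1 : Matrix (Fin d) (Fin d) ℝ)).PosDef := smul_one_posDef hs
      have hinv : (s • (1 : Matrix (Fin d) (Fin d) ℝ))⁻¹
          = s⁻¹ • (1 : Matrix (Fin d) (Fin d) ℝ) := by
        refine Matrix.inv_eq_right_inv ?_
        rw [Matrix.smul_mul, Matrix.mul_smul, Matrix.one_mul, smul_smul,
          mul_inv_cancel₀ hs.ne', one_smul]
      have hcond := h2 _ hYpd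
      rw [hinv] at hcond
      have htr1 : (B * Z * B * (s⁻¹ • (1 : Matrix (Fin d) (Fin d) ℝ))).trace
          = s⁻¹ * (Zh * Z).trace := by
        have hBB : B * B = Zh := psdSqrt_mul_self hZh.posSemidef
        rw [Matrix.mul_smul, Matrix.mul_one, Matrix.trace_smul, smul_eq_mul]
        congr 1
        rw [Matrix.trace_mul_cycle, hBB]
      have htrs : (s • (1 : Matrix (Fin d) (Fin d) ℝ)).trace = s * d := by
        rw [Matrix.trace_smul, Matrix.trace_one]; simp [smul_eq_mul]
      rw [htr1, htrs] at hcond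
      have hZtr : 0 ≤ Z.trace := trace_nonneg' h1
      have hZZh : (Zh * Z).trace ≤ (d:ℝ)^2 * (Zh.trace * Z.trace) := by
        rw [Matrix.trace]
        have hbound : ∀ i : Fin d, (Zh * Z).diag i ≤ (d:ℝ) * (Zh.trace * Z.trace) := by
          intro i
          rw [Matrix.diag_apply, Matrix.mul_apply]
          have : ∀ j : Fin d, j ∈ Finset.univ → Zh i j * Z j i ≤ Zh.trace * Z.trace := by
            intro j _
            have h1' := abs_entry_le_trace hZh.posSemidef i j
            have h2' := abs_entry_le_trace h1 j i
            have := abs_nonneg (Zh i j)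
            have := abs_nonneg (Z j i)
            calc Zh i j * Z j i ≤ |Zh i j * Z j i| := le_abs_self _
            _ = |Zh i j| * |Z j i| := abs_mul _ _
            _ ≤ Zh.trace * Z.trace := by
                exact mul_le_mul h1' h2' (abs_nonneg _) (le_trans (abs_nonneg _) h1')
          calc ∑ j, Zh i j * Z j i ≤ ∑ _j : Fin d, Zh.trace * Z.trace :=
            Finset.sum_le_sum this
          _ = (d:ℝ) * (Zh.trace * Z.trace) := by simp [mul_comm]
        calc ∑ i, (Zh * Z).diag i ≤ ∑ _i : Fin d, (d:ℝ) * (Zh.trace * Z.trace) :=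
          Finset.sum_le_sum fun i _ => hbound i
        _ = (d:ℝ) * ((d:ℝ) * (Zh.trace * Z.trace)) := by simp [mul_comm]
        _ = (d:ℝ)^2 * (Zh.trace * Z.trace) := by ring
      have hhalf : s⁻¹ * ((d:ℝ)^2 * (Zh.trace * Z.trace)) ≤ Z.trace / 2 := by
        rw [hsdef]
        rw [inv_mul_le_iff₀ (by positivity)]
        nlinarith
      have hZC : Z.trace ≤ C := by
        have : s⁻¹ * (Zh * Z).trace ≤ Z.trace / 2 := by
          refine le_trans ?_ hhalf
          exact mul_le_mul_of_nonneg_left hZZh (by positivity)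
        rw [hCdef]; linarith
      intro i _
      intro j _
      have := abs_entry_le_trace h1 i j
      constructor
      · simp only [neg_le]
        calc -Z i j ≤ |Z i j| := neg_le_abs _
        _ ≤ C := le_trans this hZC
      · calc Z i j ≤ |Z i j| := le_abs_self _
        _ ≤ C := le_trans this hZC
    have hKcompact : IsCompact (Set.pi Set.univ
        (fun _ : Fin d => Set.pi Set.univ fun _ : Fin d => Set.Icc (-C) C)
        : Set (Matrix (Fin d) (Fin d) ℝ)) :=
      isCompact_univ_pi fun _ => isCompact_univ_pi fun _ => isCompact_Icc
    exact hKcompact.of_isClosed_subset hclosed hsub
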